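/- For all n, k ≥ 1 and m ≥ 0, the word E_{1,n} · δ_m · E_{1,k} is a palindrome if and only if either n = k, or |n − k| = 1 and m has the same parity as min{n,k}. -/

import Mathlib

/-- The alphabet: letters a, b (for the period-doubling sequence) and c (used by Θ₂). -/
inductive Letter : Type
  | a | b | c
deriving DecidableEq, Repr

open Letter

/-- The period-doubling substitution σ : a ↦ ab, b ↦ aa, extended to words
(the extra letter c is left untouched; it is never produced). -/
def sigmaw : List Letter → List Letter :=
  fun w => w.flatMap fun x => match x with
    | .a => [.a, .b]
    | .b => [.a, .a]
    | .c => [.c]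

/-- A_m = σ^m(a). -/
def A (m : ℕ) : List Letter := sigmaw^[m] [.a]

/-- B_m = σ^m(b). -/
def B (m : ℕ) : List Letter := sigmaw^[m] [.b]

/-- δ_m, the last letter of A_m. -/
def delta (m : ℕ) : Letter := (A m).getLastD .a

/-- The period-doubling sequence D, as a function giving its (n+1)-st letter
(0-indexed); it is the fixed point of σ beginning with a, and A_{n+1} is a
prefix of it of length 2^{n+1} > n. -/
def D (n : ℕ) : Letter := (A (n + 1)).getD n .a

/-- The finite segment D[i .. i+len−1] of the period-doubling sequence,
with 1-based starting position i. -/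
def Dseg (i len : ℕ) : List Letter := (List.range len).map fun k => D (i - 1 + k)

/-- u occurs in the finite word w at (1-based) position i. -/
def OccursAt {α : Type*} (u w : List α) (i : ℕ) : Prop :=
  1 ≤ i ∧ i - 1 + u.length ≤ w.length ∧ (w.drop (i - 1)).take u.length = u

/-- u is a factor of the finite word w. -/
def IsFactor {α : Type*} (u w : List α) : Prop := ∃ i, OccursAt u w i

/-- u occurs in the period-doubling sequence D at (1-based) position i. -/
def DOccursAt (u : List Letter) (i : ℕ) : Prop := 1 ≤ i ∧ Dseg i u.length = u

/-- u is a factor of the period-doubling sequence D. -/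
def FactorD (u : List Letter) : Prop := ∃ i, DOccursAt u i

/-- L(u,p): the starting position of the p-th occurrence (p ≥ 1) of u in D. -/
noncomputable def L (u : List Letter) (p : ℕ) : ℕ := Nat.nth (DOccursAt u) (p - 1)

/-- r_p(u): the p-th return word of u (p ≥ 1), i.e. D[L(u,p) .. L(u,p+1)−1];
r_0(u) is the prefix of D preceding the first occurrence of u. -/
noncomputable def r (u : List Letter) (p : ℕ) : List Letter :=
  if p = 0 then Dseg 1 (L u 1 - 1) else Dseg (L u p) (L u (p + 1) - L u p)

/-- The morphism τ₁ : a ↦ a, b ↦ bb, extended to words. -/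
def tau1 : List Letter → List Letter :=
  fun w => w.flatMap fun x => match x with
    | .a => [.a]
    | .b => [.b, .b]
    | .c => [.c]

/-- The morphism τ₂ : a ↦ ab, b ↦ acac, extended to words. -/
def tau2 : List Letter → List Letter :=
  fun w => w.flatMap fun x => match x with
    | .a => [.a, .b]
    | .b => [.a, .c, .a, .c]
    | .c => [.c]

/-- Θ₁[p], the p-th letter (p ≥ 1) of Θ₁ = τ₁(D): since |τ₁(w)| ≥ |w|, the p-th
letter of Θ₁ is the p-th letter of the image of the length-p prefix of D. -/
def Theta1 (p : ℕ) : Letter := (tau1 (Dseg 1 p)).getD (p - 1) .a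

/-- Θ₂[p], the p-th letter (p ≥ 1) of Θ₂ = τ₂(D). -/
def Theta2 (p : ℕ) : Letter := (tau2 (Dseg 1 p)).getD (p - 1) .a

/-- The envelope word E_{1,m} = A_m with its last letter δ_m deleted. -/
def E1 (m : ℕ) : List Letter := (A m).dropLast

/-- The envelope word E_{2,m} = B_m B_{m−1} with its last letter δ_m deleted. -/
def E2 (m : ℕ) : List Letter := (B m ++ B (m - 1)).dropLast

/-- Enumeration of the envelope words in the order
E_{1,1} ⊏ E_{2,1} ⊏ E_{1,2} ⊏ E_{2,2} ⊏ …. -/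
def Eword (k : ℕ) : List Letter := if k % 2 = 0 then E1 (k / 2 + 1) else E2 (k / 2 + 1)

/-- Env(u): the ⊏-least envelope word having u as a factor. -/
noncomputable def Env (u : List Letter) : List Letter :=
  Eword (sInf {k | IsFactor u (Eword k)})

/-- The letterwise complement exchanging a and b. -/
def comp : Letter → Letter
  | .a => .b
  | .b => .a
  | .c => .c

lemma sigmaw_append (u v : List Letter) : sigmaw (u ++ v) = sigmaw u ++ sigmaw v :=
  List.flatMap_append

lemma sigmaw_iter_append (m : ℕ) (u v : List Letter) :
    sigmaw^[m] (u ++ v) = sigmaw^[m] u ++ sigmaw^[m] v := by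
  induction m generalizing u v with
  | zero => simp
  | succ m ih => rw [Function.iterate_succ_apply, Function.iterate_succ_apply,
      Function.iterate_succ_apply, sigmaw_append, ih]

lemma A_succ (m : ℕ) : A (m + 1) = A m ++ B m := by
  have h : sigmaw [Letter.a] = [Letter.a] ++ [Letter.b] := rfl
  rw [A, Function.iterate_succ_apply, h, sigmaw_iter_append]; rfl

lemma B_succ (m : ℕ) : B (m + 1) = A m ++ A m := by
  have h : sigmaw [Letter.b] = [Letter.a] ++ [Letter.a] := rfl
  rw [B, Function.iterate_succ_apply, h, sigmaw_iter_append]; rfl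

lemma length_AB (m : ℕ) : (A m).length = 2 ^ m ∧ (B m).length = 2 ^ m := by
  induction m with
  | zero => exact ⟨rfl, rfl⟩
  | succ m ih =>
    rw [A_succ, B_succ]
    simp [List.length_append, ih.1, ih.2, pow_succ]
    ring

lemma length_A (m : ℕ) : (A m).length = 2 ^ m := (length_AB m).1

lemma A_ne_nil (m : ℕ) : A m ≠ [] :=
  List.ne_nil_of_length_pos (by rw [length_A]; exact Nat.two_pow_pos m)

lemma B_ne_nil (m : ℕ) : B m ≠ [] :=
  List.ne_nil_of_length_pos (by rw [(length_AB m).2]; exact Nat.two_pow_pos m)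

lemma A_eq (m : ℕ) : A m = E1 m ++ [delta m] := by
  have h := A_ne_nil m
  have hd : delta m = (A m).getLast h := by
    rw [delta]
    conv_lhs => rw [← List.dropLast_append_getLast h]
    rw [List.getLastD_concat]
  rw [hd, E1, List.dropLast_append_getLast h]

lemma length_E1 (m : ℕ) : (E1 m).length = 2 ^ m - 1 := by
  have := length_A m
  rw [A_eq m] at this
  simp at this
  omega

lemma struct (m : ℕ) :
    delta m = (if m % 2 = 0 then Letter.a else Letter.b) ∧
    delta (m + 1) = (if (m + 1) % 2 = 0 then Letter.a else Letter.b) ∧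
    B m = E1 m ++ [delta (m + 1)] ∧
    E1 (m + 1) = A m ++ E1 m ∧
    (E1 m).reverse = E1 m := by
  induction m with
  | zero =>
    refine ⟨rfl, ?_, ?_, ?_, rfl⟩ <;> decide
  | succ m ih =>
    obtain ⟨h0, h1, hB, hE, hrev⟩ := ih
    have hA2 : A (m + 2) = A (m + 1) ++ A m ++ A m := by
      rw [A_succ (m + 1), B_succ]; rw [List.append_assoc]
    have h2 : delta (m + 2) = (if (m + 2) % 2 = 0 then Letter.a else Letter.b) := by
      have : delta (m + 2) = delta m := by
        rw [delta, hA2, A_eq m]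
        rw [show A (m + 1) ++ (E1 m ++ [delta m]) ++ (E1 m ++ [delta m]) =
          (A (m + 1) ++ (E1 m ++ [delta m]) ++ E1 m) ++ [delta m] by simp,
          List.getLastD_concat]
      rw [this, h0, Nat.add_mod_right]
    have hBnew : B (m + 1) = E1 (m + 1) ++ [delta (m + 2)] := by
      have hdd : delta m = delta (m + 2) := by
        rw [h0, h2, Nat.add_mod_right]
      rw [B_succ, hE, A_eq m, hdd]
      simp
    have hEnew : E1 (m + 2) = A (m + 1) ++ E1 (m + 1) := by
      rw [E1, A_succ (m + 1), List.dropLast_append_of_ne_nil (B_ne_nil (m+1)), hBnew,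
        List.dropLast_concat]
    have hrevnew : (E1 (m + 1)).reverse = E1 (m + 1) := by
      rw [hE, List.reverse_append, hrev, A_eq m, List.reverse_append, hrev]
      simp [List.append_assoc]
    exact ⟨h1, h2, hBnew, hEnew, hrevnew⟩

lemma delta_formula (m : ℕ) : delta m = (if m % 2 = 0 then Letter.a else Letter.b) :=
  (struct m).1

lemma B_eq (m : ℕ) : B m = E1 m ++ [delta (m + 1)] := (struct m).2.2.1

lemma E1_succ (m : ℕ) : E1 (m + 1) = A m ++ E1 m := (struct m).2.2.2.1

lemma E1_palindrome (m : ℕ) : (E1 m).reverse = E1 m := (struct m).2.2.2.2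

lemma delta_parity_iff {p q : ℕ} : delta p = delta q ↔ p % 2 = q % 2 := by
  rw [delta_formula, delta_formula]
  rcases Nat.mod_two_eq_zero_or_one p with hp | hp <;>
    rcases Nat.mod_two_eq_zero_or_one q with hq | hq <;>
      simp [hp, hq]

lemma A_prefix (n d : ℕ) : (A (n + d)).take (2 ^ n) = A n := by
  induction d with
  | zero => exact List.take_of_length_le (le_of_eq (length_A n))
  | succ d ih =>
    rw [show n + (d + 1) = (n + d) + 1 by omega, A_succ, List.take_append, ih,
      length_A]
    have : 2 ^ n - 2 ^ (n + d) = 0 := by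
      have := Nat.pow_le_pow_right (show 1 ≤ 2 by omega) (Nat.le_add_right n d)
      omega
    rw [this]
    simp

lemma E1_take {n k : ℕ} (h : 2 ^ n < 2 ^ k) : (E1 k).take (2 ^ n) = A n := by
  have hnk : n < k := by
    by_contra hc
    exact absurd (Nat.pow_le_pow_right (show 1 ≤ 2 by omega) (not_lt.mp hc)) (not_le.mpr h)
  rw [E1, List.dropLast_eq_take, length_A, List.take_take]
  have hmin : 2 ^ n ⊓ (2 ^ k - 1) = 2 ^ n := by
    simp only [inf_eq_left]
    omega
  rw [hmin, show k = n + (k - n) by omega, A_prefix]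

lemma main_aux (n k m : ℕ) (h : n < k) :
    E1 k ++ delta m :: E1 n = E1 n ++ delta m :: E1 k ↔ (k = n + 1 ∧ m % 2 = n % 2) := by
  rcases eq_or_lt_of_le (show n + 1 ≤ k by omega) with hk1 | hk2
  · -- k = n + 1
    subst hk1
    have hE : E1 (n + 1) = E1 n ++ delta n :: E1 n := by
      rw [E1_succ, A_eq]; simp
    rw [hE]
    constructor
    · intro heq
      refine ⟨rfl, ?_⟩
      rw [List.append_assoc] at heq
      have h2 := List.append_cancel_left heq
      have h3 : delta n = delta m := by
        have := congrArg (fun l => l.getD 0 Letter.c) h2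
        simpa using this
      exact delta_parity_iff.mp h3.symm
    · rintro ⟨-, hm⟩
      have h3 : delta m = delta n := delta_parity_iff.mpr hm
      rw [h3]
      simp [List.append_assoc]
  · -- k ≥ n + 2
    have hk2' : n + 2 ≤ k := hk2
    constructor
    · intro heq
      exfalso
      have hlt : 2 ^ (n + 1) < 2 ^ k :=
        Nat.pow_lt_pow_right (by omega) (by omega)
      have hlt' : 2 ^ n < 2 ^ k := Nat.pow_lt_pow_right (by omega) (by omega)
      have htake := congrArg (List.take (2 ^ (n + 1))) heq
      -- LHS
      have hL : (E1 k ++ delta m :: E1 n).take (2 ^ (n + 1)) = A (n + 1) := by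
        rw [List.take_append, length_E1]
        have h0 : 2 ^ (n + 1) - (2 ^ k - 1) = 0 := by omega
        rw [h0]
        have := E1_take hlt
        rw [E1, List.dropLast_eq_take, length_A, List.take_take] at *
        have hmin : 2 ^ (n + 1) ⊓ (2 ^ k - 1) = 2 ^ (n + 1) := by
          simp only [inf_eq_left]; omega
        rw [hmin, show k = (n + 1) + (k - (n + 1)) by omega, A_prefix]
        simp
      -- RHS
      have hR : (E1 n ++ delta m :: E1 k).take (2 ^ (n + 1)) =
          E1 n ++ delta m :: A n := by
        rw [List.take_append, length_E1]
        have h1 : 2 ^ (n + 1) - (2 ^ n - 1) = 2 ^ n + 1 := by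
          have : 2 ^ (n + 1) = 2 * 2 ^ n := by rw [pow_succ]; ring
          have h2 : 1 ≤ 2 ^ n := Nat.one_le_two_pow
          omega
        have hle : (E1 n).length ≤ 2 ^ (n + 1) := by
          rw [length_E1]
          have h2 : (2:ℕ) ^ n ≤ 2 ^ (n + 1) := Nat.pow_le_pow_right (by omega) (by omega)
          omega
        rw [h1, List.take_of_length_le hle, List.take_succ_cons, E1_take hlt']
      rw [hL, hR] at htake
      rw [A_succ, B_eq, A_eq n] at htake
      rw [List.append_assoc] at htake
      have h2 := List.append_cancel_left htake
      have h3 : delta n = delta m ∧ delta (n + 1) = delta n := by simpa using h2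
      have := delta_parity_iff.mp h3.2
      omega
    · rintro ⟨hk1, -⟩
      omega

/-- For all n, k ≥ 1 and m ≥ 0, the word E_{1,n} δ_m E_{1,k} is a
palindrome if and only if n = k, or |n − k| = 1 and m has the same parity as
min{n,k}. -/
theorem palindrome_E1_delta_E1 (n k m : ℕ) (hn : 1 ≤ n) (hk : 1 ≤ k) :
    (E1 n ++ delta m :: E1 k).reverse = E1 n ++ delta m :: E1 k ↔
      n = k ∨ ((n = k + 1 ∨ k = n + 1) ∧ m % 2 = min n k % 2) := by
  have hrev : (E1 n ++ delta m :: E1 k).reverse = E1 k ++ delta m :: E1 n := by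
    rw [show delta m :: E1 k = [delta m] ++ E1 k from rfl, List.reverse_append,
      List.reverse_append, E1_palindrome, E1_palindrome]
    simp
  rw [hrev]
  rcases lt_trichotomy n k with h | h | h
  · rw [main_aux n k m h, min_eq_left h.le]
    omega
  · subst h
    simp
  · rw [eq_comm, main_aux k n m h, min_eq_right h.le]
    omega
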